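/- arXiv:2006.05939 — 3 statements merged into one kernel-verified Lean document; each statement's English description precedes it below -/
import Mathlib

section
/- Let F : ℝ^d → ℝ be continuous and λ₀ ∈ ℝ such that the sub-level set Ω_F(λ) = {ξ : F(ξ) ≤ λ} is connected for all λ ≥ λ₀. Then every strict local minimum ξ* of F that is not a global minimum satisfies F(ξ*) ≤ λ₀. -/
/-- If all sub-level sets `{ξ | F ξ ≤ λ}` with `λ ≥ λ₀` are connected, then every
strict local minimum of `F` that is not a global minimum has value at most `λ₀`. -/
theorem strict_local_min_le_of_connected_sublevels_above
    (d : ℕ) (F : EuclideanSpace ℝ (Fin d) → ℝ) (hF : Continuous F) (lam₀ : ℝ)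
    (hconn : ∀ lam : ℝ, lam₀ ≤ lam →
      IsPreconnected {ξ : EuclideanSpace ℝ (Fin d) | F ξ ≤ lam})
    (ξstar : EuclideanSpace ℝ (Fin d))
    (hmin : ∃ ε > (0 : ℝ), ∀ ξ' : EuclideanSpace ℝ (Fin d),
      ξ' ≠ ξstar → ‖ξ' - ξstar‖ ≤ ε → F ξstar < F ξ')
    (hnotglob : ¬ ∀ ξ : EuclideanSpace ℝ (Fin d), F ξstar ≤ F ξ) :
    F ξstar ≤ lam₀ := by
  by_contra hlt
  push_neg at hlt
  push_neg at hnotglob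
  obtain ⟨ξ₁, hξ₁⟩ := hnotglob
  obtain ⟨ε, hε, hloc⟩ := hmin
  set Ω : Set (EuclideanSpace ℝ (Fin d)) := {ξ | F ξ ≤ F ξstar} with hΩ
  have hpre := hconn (F ξstar) hlt.le
  -- Ω ∩ closedBall ξstar ε = {ξstar}
  have hball : ∀ ξ ∈ Ω, ‖ξ - ξstar‖ ≤ ε → ξ = ξstar := by
    intro ξ hξ hd
    by_contra hne
    exact absurd hξ (not_le.mpr (hloc ξ hne hd))
  have hU : IsOpen (Metric.ball ξstar ε) := Metric.isOpen_ball
  have hV : IsOpen {ξ : EuclideanSpace ℝ (Fin d) | ε / 2 < ‖ξ - ξstar‖} := by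
    have : Continuous fun ξ : EuclideanSpace ℝ (Fin d) => ‖ξ - ξstar‖ :=
      (continuous_id.sub continuous_const).norm
    exact isOpen_lt continuous_const this
  have hsub : Ω ⊆ Metric.ball ξstar ε ∪ {ξ | ε / 2 < ‖ξ - ξstar‖} := by
    intro ξ hξ
    rcases le_or_gt ‖ξ - ξstar‖ (ε / 2) with h | h
    · left
      have := hball ξ hξ (h.trans (by linarith))
      simp [this, Metric.mem_ball, hε]
    · right; exact h
  have hne1 : (Ω ∩ Metric.ball ξstar ε).Nonempty :=
    ⟨ξstar, show F ξstar ≤ F ξstar from le_refl _, by simp [Metric.mem_ball, hε]⟩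
  have hne2 : (Ω ∩ {ξ | ε / 2 < ‖ξ - ξstar‖}).Nonempty := by
    refine ⟨ξ₁, show F ξ₁ ≤ F ξstar from hξ₁.le, ?_⟩
    by_contra h
    simp only [Set.mem_setOf_eq, not_lt] at h
    have hne : ξ₁ ≠ ξstar := by
      intro he; rw [he] at hξ₁; exact lt_irrefl _ hξ₁
    exact absurd hξ₁ (not_lt.mpr (hloc ξ₁ hne (h.trans (by linarith))).le)
  obtain ⟨ξ, hξΩ, hξU, hξV⟩ := hpre _ _ hU hV hsub hne1 hne2
  have := hball ξ hξΩ ((mem_ball_iff_norm.mp hξU).le)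
  rw [this] at hξV
  simp at hξV
  linarith
end

section
/- Let σ(x) = max(x, 0) applied coordinatewise (ReLU), and let w₁, w₂ ∈ ℝ^n with ‖w₁‖ = ‖w₂‖ = 1 and angle(w₁, w₂) ≤ α. Let X be a random vector in ℝ^n with second moment matrix Σ_X = E[X Xᵀ]. Then E[(σ(⟨w₁, X⟩) − σ(⟨w₂, X⟩))²] ≤ 4 ‖Σ_X‖ α², where ‖Σ_X‖ is the operator norm. -/
open MeasureTheory InnerProductGeometry

/-- Perturbation lemma for ReLU units: if `w₁, w₂` are unit vectors at angle at most
`α`, then `E[(σ⟨w₁,X⟩ − σ⟨w₂,X⟩)²] ≤ 4 ‖Σ_X‖ α²`, where `Σ_X = E[X Xᵀ]` and `‖·‖`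
is the operator norm. -/
theorem relu_perturbation_bound
    {Ω : Type*} [MeasureSpace Ω] (μ : Measure Ω) [IsProbabilityMeasure μ]
    (n : ℕ) (X : Ω → EuclideanSpace ℝ (Fin n))
    (hXmeas : Measurable X) (C : ℝ) (hXbdd : ∀ ω, ‖X ω‖ ≤ C)
    (SigX : Matrix (Fin n) (Fin n) ℝ)
    (hSigX : ∀ i j, SigX i j = ∫ ω, X ω i * X ω j ∂μ)
    (w₁ w₂ : EuclideanSpace ℝ (Fin n)) (hw₁ : ‖w₁‖ = 1) (hw₂ : ‖w₂‖ = 1)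
    (α : ℝ) (hangle : angle w₁ w₂ ≤ α) :
    ∫ ω, (max (inner ℝ w₁ (X ω)) 0 - max (inner ℝ w₂ (X ω)) (0:ℝ))^2 ∂μ ≤
      4 * ‖Matrix.toEuclideanCLM (𝕜 := ℝ) SigX‖ * α^2 := by
  set v : EuclideanSpace ℝ (Fin n) := w₁ - w₂ with hv
  set A := Matrix.toEuclideanCLM (𝕜 := ℝ) SigX with hA
  -- componentwise measurability and boundedness
  have hXi : ∀ i, Measurable fun ω => X ω i := by
    intro i
    exact (EuclideanSpace.proj i : EuclideanSpace ℝ (Fin n) →L[ℝ] ℝ).continuous.measurable.comp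
      hXmeas
  have hXib : ∀ i ω, |X ω i| ≤ C := by
    intro i ω
    refine le_trans ?_ (hXbdd ω)
    rw [EuclideanSpace.norm_eq, ← Real.sqrt_sq_eq_abs]
    apply Real.sqrt_le_sqrt
    have := Finset.single_le_sum (f := fun j => ‖X ω j‖^2)
      (fun j _ => by positivity) (Finset.mem_univ i)
    simpa [sq_abs] using this
  -- integrability of products
  have hint : ∀ i j, Integrable (fun ω => X ω i * X ω j) μ := by
    intro i j
    refine ⟨((hXi i).mul (hXi j)).aestronglyMeasurable, ?_⟩
    refine HasFiniteIntegral.of_bounded (C := C * C) ?_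
    filter_upwards with ω
    calc ‖X ω i * X ω j‖ = |X ω i| * |X ω j| := by rw [norm_mul]; rfl
    _ ≤ C * C := by
        have h0 : (0:ℝ) ≤ C := le_trans (abs_nonneg _) (hXib i ω)
        exact mul_le_mul (hXib i ω) (hXib j ω) (abs_nonneg _) h0
  -- pointwise bound: (σ a - σ b)^2 ≤ (a-b)^2 = ⟨v,X⟩^2
  have hpt : ∀ ω, (max (inner ℝ w₁ (X ω)) 0 - max (inner ℝ w₂ (X ω)) (0:ℝ))^2 ≤
      (inner ℝ v (X ω) : ℝ)^2 := by
    intro ω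
    have h1 : |max (inner ℝ w₁ (X ω)) (0:ℝ) - max (inner ℝ w₂ (X ω)) 0| ≤
        |(inner ℝ w₁ (X ω) : ℝ) - inner ℝ w₂ (X ω)| := abs_max_sub_max_le_abs _ _ _
    have h2 : (inner ℝ v (X ω) : ℝ) = (inner ℝ w₁ (X ω) : ℝ) - inner ℝ w₂ (X ω) := by
      rw [hv, inner_sub_left]
    rw [h2, ← sq_abs, ← sq_abs ((inner ℝ w₁ (X ω) : ℝ) - inner ℝ w₂ (X ω))]
    exact pow_le_pow_left₀ (abs_nonneg _) h1 2
  -- the dominating function g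
  have hginner : ∀ ω, (inner ℝ v (X ω) : ℝ) = ∑ i, v i * X ω i := by
    intro ω
    simp [PiLp.inner_apply, mul_comm]
  -- ∫ ⟨v,X⟩² = ⟪v, A v⟫
  have hgint : Integrable (fun ω => (inner ℝ v (X ω) : ℝ)^2) μ := by
    have : (fun ω => (inner ℝ v (X ω) : ℝ)^2) =
        fun ω => ∑ i, ∑ j, (v i * v j) * (X ω i * X ω j) := by
      funext ω
      rw [hginner, sq, Finset.sum_mul_sum]
      congr 1; funext i; congr 1; funext j; ring
    rw [this]
    exact integrable_finset_sum _ fun i _ =>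
      integrable_finset_sum _ fun j _ => (hint i j).const_mul _
  have hgval : ∫ ω, (inner ℝ v (X ω) : ℝ)^2 ∂μ = (inner ℝ v (A v) : ℝ) := by
    have h1 : ∀ ω, (inner ℝ v (X ω) : ℝ)^2 =
        ∑ i, ∑ j, (v i * v j) * (X ω i * X ω j) := by
      intro ω
      rw [hginner, sq, Finset.sum_mul_sum]
      congr 1; funext i; congr 1; funext j; ring
    calc ∫ ω, (inner ℝ v (X ω) : ℝ)^2 ∂μ
        = ∫ ω, ∑ i, ∑ j, (v i * v j) * (X ω i * X ω j) ∂μ := by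
          congr 1; funext ω; exact h1 ω
      _ = ∑ i, ∑ j, (v i * v j) * SigX i j := by
          rw [integral_finset_sum _ fun i _ =>
            integrable_finset_sum _ fun j _ => (hint i j).const_mul _]
          congr 1; funext i
          rw [integral_finset_sum _ fun j _ => (hint i j).const_mul _]
          congr 1; funext j
          rw [integral_const_mul, hSigX]
      _ = (inner ℝ v (A v) : ℝ) := by
          have hAv : ∀ i, (A v) i = ∑ j, SigX i j * v j := by
            intro i
            have := Matrix.ofLp_toEuclideanCLM (𝕜 := ℝ) SigX v
            have h2 := congrFun this i
            simpa [Matrix.mulVec, dotProduct, WithLp.equiv, -Matrix.ofLp_toEuclideanCLM] using h2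
          simp only [PiLp.inner_apply, RCLike.inner_apply, conj_trivial]
          simp only [hAv, Finset.mul_sum, Finset.sum_mul]
          exact Finset.sum_congr rfl fun i _ => Finset.sum_congr rfl fun j _ => by ring
  -- ⟪v, A v⟫ ≤ ‖A‖ ‖v‖²
  have hAnorm : (inner ℝ v (A v) : ℝ) ≤ ‖A‖ * ‖v‖^2 := by
    calc (inner ℝ v (A v) : ℝ) ≤ ‖v‖ * ‖A v‖ := real_inner_le_norm v (A v)
    _ ≤ ‖v‖ * (‖A‖ * ‖v‖) := by
        exact mul_le_mul_of_nonneg_left (A.le_opNorm v) (norm_nonneg v)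
    _ = ‖A‖ * ‖v‖^2 := by ring
  -- ‖v‖² ≤ α²
  have hθ0 : 0 ≤ angle w₁ w₂ := angle_nonneg w₁ w₂
  have hα0 : 0 ≤ α := le_trans hθ0 hangle
  have hvnorm : ‖v‖^2 ≤ α^2 := by
    have hcos : Real.cos (angle w₁ w₂) = inner ℝ w₁ w₂ := by
      rw [cos_angle, hw₁, hw₂]; simp
    have h1 : ‖v‖^2 = 2 - 2 * (inner ℝ w₁ w₂ : ℝ) := by
      rw [hv, norm_sub_sq_real, hw₁, hw₂]; ring
    have h2 : 1 - (angle w₁ w₂)^2 / 2 ≤ Real.cos (angle w₁ w₂) :=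
      Real.one_sub_sq_div_two_le_cos
    have h3 : (angle w₁ w₂)^2 ≤ α^2 := pow_le_pow_left₀ hθ0 hangle 2
    rw [h1, ← hcos]
    nlinarith
  -- put it together
  have hopnn : 0 ≤ ‖A‖ := norm_nonneg A
  calc ∫ ω, (max (inner ℝ w₁ (X ω)) 0 - max (inner ℝ w₂ (X ω)) (0:ℝ))^2 ∂μ
      ≤ ∫ ω, (inner ℝ v (X ω) : ℝ)^2 ∂μ := by
        apply integral_mono_of_nonneg
        · filter_upwards with ω; positivity
        · exact hgint
        · filter_upwards with ω; exact hpt ω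
    _ = (inner ℝ v (A v) : ℝ) := hgval
    _ ≤ ‖A‖ * ‖v‖^2 := hAnorm
    _ ≤ ‖A‖ * α^2 := mul_le_mul_of_nonneg_left hvnorm hopnn
    _ ≤ 4 * ‖A‖ * α^2 := by nlinarith
end

section
/- Consequence of the linear skip-connection theorem: under its hypotheses, every strict local minimum ξ* of F₁(W, V, θ) = E[L(W(x + V g(θ, x)), y)] satisfies F₁(ξ*) ≤ inf_W E[L(W x, y)], i.e., no strict local minimum is worse than the global minimum of the linear model. -/
open MeasureTheory Matrix

/-- Consequence of the linear skip-connection theorem: under its hypotheses, every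
strict local minimum of `F₁(W, V, θ) = E[L(W(x + V g(θ, x)), y)]` has value at most
`inf_W E[L(W x, y)]`, the global minimum value of the linear model. -/
theorem linear_skip_connection_local_min
    {Ω : Type*} [MeasureSpace Ω] (μ : Measure Ω) [IsProbabilityMeasure μ]
    (dx dy dz : ℕ) (hyx : dy ≤ dx) (hyz : dy ≤ dz)
    {Θ : Type*} [TopologicalSpace Θ]
    (x : Ω → Fin dx → ℝ) (y : Ω → Fin dy → ℝ)
    (hx : Measurable x) (hy : Measurable y)
    (Cx Cy : ℝ) (hxb : ∀ ω i, |x ω i| ≤ Cx) (hyb : ∀ ω i, |y ω i| ≤ Cy)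
    (L : (Fin dy → ℝ) → (Fin dy → ℝ) → ℝ) (hL : Continuous fun p : _ × _ => L p.1 p.2)
    (hLconv : ∀ yv, ConvexOn ℝ Set.univ fun w => L w yv)
    (g : Θ → (Fin dx → ℝ) → (Fin dz → ℝ))
    (hg : Continuous fun p : Θ × (Fin dx → ℝ) => g p.1 p.2)
    (hconn : ∀ (xt : Ω → Fin dx ⊕ Fin dz → ℝ) (lam : ℝ),
      IsPreconnected {Z : Matrix (Fin dy) (Fin dx ⊕ Fin dz) ℝ |
        ∫ ω, L (Z.mulVec (xt ω)) (y ω) ∂μ ≤ lam})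
    (F₁ : Matrix (Fin dy) (Fin dx) ℝ × Matrix (Fin dx) (Fin dz) ℝ × Θ → ℝ)
    (hF₁ : ∀ W V θ, F₁ (W, V, θ) =
      ∫ ω, L (W.mulVec (x ω + V.mulVec (g θ (x ω)))) (y ω) ∂μ)
    (ξstar : Matrix (Fin dy) (Fin dx) ℝ × Matrix (Fin dx) (Fin dz) ℝ × Θ)
    (hmin : ∃ U ∈ nhds ξstar, ∀ ξ ∈ U, ξ ≠ ξstar → F₁ ξstar < F₁ ξ) :
    F₁ ξstar ≤ ⨅ W : Matrix (Fin dy) (Fin dx) ℝ,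
      ∫ ω, L (W.mulVec (x ω)) (y ω) ∂μ := by
  classical
  obtain ⟨U, hU, hUmin⟩ := hmin
  obtain ⟨W0, V0, θ0⟩ := ξstar
  -- degenerate case dy = 0
  rcases Nat.eq_zero_or_pos dy with hdy0 | hdy
  · haveI : IsEmpty (Fin dy) := by rw [hdy0]; infer_instance
    refine le_ciInf fun W => le_of_eq ?_
    rw [hF₁]
    congr 1
    funext ω
    congr 1
    exact Subsingleton.elim _ _
  by_cases hinj : Function.Injective (fun v : Fin dx → ℝ => W0.mulVec v)
  · -- injective case: use the connectedness of sublevel sets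
    have hinj' : Function.Injective (Matrix.mulVecLin W0) := by
      rw [Matrix.coe_mulVecLin]; exact hinj
    have hdxy : dx ≤ dy := by
      have h := LinearMap.finrank_le_finrank_of_injective hinj'
      simpa [Module.finrank_fin_fun] using h
    have hdeq : dy = dx := le_antisymm hyx hdxy
    let e : Fin dy ≃ Fin dx := finCongr hdeq
    -- square reindexing and its mulVec formula
    have hQmul : ∀ (A : Matrix (Fin dy) (Fin dx) ℝ) (v : Fin dy → ℝ),
        (A.submatrix id ⇑e).mulVec v = A.mulVec (fun i => v (e.symm i)) := by
      intro A v
      funext j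
      simp only [Matrix.mulVec, dotProduct, Matrix.submatrix_apply, id]
      exact Fintype.sum_equiv e _ _ (fun i => by simp)
    have hQdet : IsUnit (W0.submatrix id ⇑e).det := by
      rw [← Matrix.isUnit_iff_isUnit_det, ← Matrix.mulVec_injective_iff_isUnit]
      intro v w h
      rw [hQmul, hQmul] at h
      have h2 := hinj h
      funext i
      have := congrFun h2 (e i)
      simpa using this
    -- setup
    set xt : Ω → (Fin dx ⊕ Fin dz) → ℝ := fun ω => Sum.elim (x ω) (g θ0 (x ω)) with hxt
    set lam : ℝ := F₁ (W0, V0, θ0) with hlam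
    set f : Matrix (Fin dy) (Fin dx ⊕ Fin dz) ℝ → ℝ :=
      fun Z => ∫ ω, L (Z.mulVec (xt ω)) (y ω) ∂μ with hf
    have hS : IsPreconnected {Z | f Z ≤ lam} := hconn xt lam
    have hfC : ∀ (A : Matrix (Fin dy) (Fin dx) ℝ) (B : Matrix (Fin dy) (Fin dz) ℝ),
        f (Matrix.fromCols A B)
          = ∫ ω, L (A.mulVec (x ω) + B.mulVec (g θ0 (x ω))) (y ω) ∂μ := by
      intro A B
      simp only [hf, hxt, Matrix.fromCols_mulVec_sumElim]
    set Zstar : Matrix (Fin dy) (Fin dx ⊕ Fin dz) ℝ := Matrix.fromCols W0 (W0 * V0)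
      with hZstardef
    have hZstar : f Zstar = lam := by
      rw [hZstardef, hfC, hlam, hF₁]
      congr 1
      funext ω
      congr 1
      rw [Matrix.mulVec_add, ← Matrix.mulVec_mulVec]
    -- the map back
    set ψ : Matrix (Fin dy) (Fin dx ⊕ Fin dz) ℝ →
        Matrix (Fin dy) (Fin dx) ℝ × Matrix (Fin dx) (Fin dz) ℝ × Θ :=
      fun Z => (Z.toCols₁,
        (((Z.toCols₁.submatrix id ⇑e)⁻¹ * Z.toCols₂).submatrix (⇑e.symm) id, θ0))
      with hψdef
    have hVmul : ∀ (M : Matrix (Fin dy) (Fin dz) ℝ) (w : Fin dz → ℝ),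
        (M.submatrix (⇑e.symm) id).mulVec w = fun j => M.mulVec w (e.symm j) := by
      intro M w
      funext j
      simp [Matrix.mulVec, dotProduct, Matrix.submatrix_apply]
    have hkey : ∀ (A : Matrix (Fin dy) (Fin dx) ℝ) (B : Matrix (Fin dy) (Fin dz) ℝ),
        IsUnit (A.submatrix id ⇑e).det → ∀ w : Fin dz → ℝ,
        A.mulVec (((((A.submatrix id ⇑e))⁻¹ * B).submatrix (⇑e.symm) id).mulVec w)
          = B.mulVec w := by
      intro A B hA w
      rw [hVmul, ← hQmul, Matrix.mulVec_mulVec, ← Matrix.mul_assoc,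
        Matrix.mul_nonsing_inv _ hA, Matrix.one_mul]
    have hF₁ψ : ∀ Z : Matrix (Fin dy) (Fin dx ⊕ Fin dz) ℝ,
        IsUnit (Z.toCols₁.submatrix id ⇑e).det → F₁ (ψ Z) = f Z := by
      intro Z hZ
      simp only [hψdef]
      rw [hF₁]
      conv_rhs => rw [hf]
      have hZc : Z = Matrix.fromCols Z.toCols₁ Z.toCols₂ :=
        (Matrix.fromCols_toCols Z).symm
      congr 1
      funext ω
      congr 1
      conv_rhs => rw [hZc]
      rw [hxt]
      simp only [Matrix.fromCols_mulVec_sumElim]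
      rw [Matrix.mulVec_add, hkey _ _ hZ]
    -- hsplit : W0 * V0 = (Q W0) * (V0.submatrix e id)
    have hsplit : W0 * V0 = (W0.submatrix id ⇑e) * (V0.submatrix ⇑e id) := by
      funext j k
      simp only [Matrix.mul_apply, Matrix.submatrix_apply, id]
      exact (Fintype.sum_equiv e _ _ (fun i => by simp)).symm
    have hψZstar : ψ Zstar = (W0, V0, θ0) := by
      simp only [hψdef, hZstardef]
      simp only [Matrix.toCols₁_fromCols, Matrix.toCols₂_fromCols]
      refine Prod.ext rfl (Prod.ext ?_ rfl)
      show (((W0.submatrix id ⇑e))⁻¹ * (W0 * V0)).submatrix (⇑e.symm) id = V0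
      rw [hsplit, ← Matrix.mul_assoc, Matrix.nonsing_inv_mul _ hQdet, Matrix.one_mul,
        Matrix.submatrix_submatrix]
      rw [Equiv.self_comp_symm]
      simp
    -- continuity of ψ at Zstar
    have hc1 : Continuous (fun Z : Matrix (Fin dy) (Fin dx ⊕ Fin dz) ℝ => Z.toCols₁) :=
      continuous_matrix fun i j => (continuous_apply (Sum.inl j)).comp (continuous_apply i)
    have hc2 : Continuous (fun Z : Matrix (Fin dy) (Fin dx ⊕ Fin dz) ℝ => Z.toCols₂) :=
      continuous_matrix fun i j => (continuous_apply (Sum.inr j)).comp (continuous_apply i)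
    have hcQ : Continuous (fun A : Matrix (Fin dy) (Fin dx) ℝ => A.submatrix id ⇑e) :=
      continuous_matrix fun i j => (continuous_apply (e j)).comp (continuous_apply i)
    have hcsub : Continuous (fun M : Matrix (Fin dy) (Fin dz) ℝ => M.submatrix (⇑e.symm) id) :=
      continuous_matrix fun i j => (continuous_apply j).comp (continuous_apply (e.symm i))
    have hcinv : ContinuousAt Inv.inv (W0.submatrix id ⇑e) := by
      refine continuousAt_matrix_inv _ ?_
      rw [Ring.inverse_eq_inv']
      exact continuousAt_inv₀ hQdet.ne_zero
    have hcmul : Continuous (fun p : Matrix (Fin dy) (Fin dy) ℝ × Matrix (Fin dy) (Fin dz) ℝ =>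
        p.1 * p.2) := continuous_fst.matrix_mul continuous_snd
    have hψcont : ContinuousAt ψ Zstar := by
      simp only [hψdef]
      have h1 : ContinuousAt (fun Z : Matrix (Fin dy) (Fin dx ⊕ Fin dz) ℝ =>
          (Z.toCols₁.submatrix id ⇑e)⁻¹) Zstar := by
        have hbase : ContinuousAt (fun Z : Matrix (Fin dy) (Fin dx ⊕ Fin dz) ℝ =>
            Z.toCols₁.submatrix id ⇑e) Zstar := (hcQ.comp hc1).continuousAt
        have heq : (fun Z : Matrix (Fin dy) (Fin dx ⊕ Fin dz) ℝ =>
            (Z.toCols₁.submatrix id ⇑e)⁻¹)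
            = Inv.inv ∘ (fun Z : Matrix (Fin dy) (Fin dx ⊕ Fin dz) ℝ =>
              Z.toCols₁.submatrix id ⇑e) := rfl
        rw [heq]
        refine ContinuousAt.comp ?_ hbase
        have hsame : (Zstar.toCols₁).submatrix id ⇑e = W0.submatrix id ⇑e := by
          rw [hZstardef, Matrix.toCols₁_fromCols]
        rw [hsame]
        exact hcinv
      have h2 : ContinuousAt (fun Z : Matrix (Fin dy) (Fin dx ⊕ Fin dz) ℝ =>
          (Z.toCols₁.submatrix id ⇑e)⁻¹ * Z.toCols₂) Zstar :=
        hcmul.continuousAt.comp (f := fun Z : Matrix (Fin dy) (Fin dx ⊕ Fin dz) ℝ =>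
          ((Z.toCols₁.submatrix id ⇑e)⁻¹, Z.toCols₂)) (h1.prodMk hc2.continuousAt)
      exact hc1.continuousAt.prodMk ((hcsub.continuousAt.comp h2).prodMk continuousAt_const)
    -- neighborhood where the map works
    have hUmem : ψ ⁻¹' U ∈ nhds Zstar := by
      apply hψcont.preimage_mem_nhds
      rw [hψZstar]
      exact hU
    have hdetmem : {Z : Matrix (Fin dy) (Fin dx ⊕ Fin dz) ℝ |
        IsUnit (Z.toCols₁.submatrix id ⇑e).det} ∈ nhds Zstar := by
      have hopen : IsOpen {Z : Matrix (Fin dy) (Fin dx ⊕ Fin dz) ℝ |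
          IsUnit (Z.toCols₁.submatrix id ⇑e).det} := by
        have : {Z : Matrix (Fin dy) (Fin dx ⊕ Fin dz) ℝ |
            IsUnit (Z.toCols₁.submatrix id ⇑e).det}
            = (fun Z : Matrix (Fin dy) (Fin dx ⊕ Fin dz) ℝ =>
                (Z.toCols₁.submatrix id ⇑e).det) ⁻¹' {(0:ℝ)}ᶜ := by
          ext Z; simp [isUnit_iff_ne_zero]
        rw [this]
        exact (isOpen_compl_singleton).preimage ((hcQ.comp hc1).matrix_det)
      refine hopen.mem_nhds ?_
      show IsUnit ((Zstar.toCols₁).submatrix id ⇑e).det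
      rw [hZstardef, Matrix.toCols₁_fromCols]
      exact hQdet
    obtain ⟨O, hOsub, hOopen, hZO⟩ := mem_nhds_iff.mp (Filter.inter_mem hUmem hdetmem)
    -- points of S in O equal Zstar
    have hlocal : ∀ Z ∈ {Z | f Z ≤ lam} ∩ O, Z = Zstar := by
      rintro Z ⟨hZS, hZOmem⟩
      obtain ⟨hZU, hZdet⟩ := hOsub hZOmem
      have hFval : F₁ (ψ Z) = f Z := hF₁ψ Z hZdet
      have hψZ : ψ Z = (W0, V0, θ0) := by
        by_contra hne
        have := hUmin (ψ Z) hZU hne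
        rw [hFval] at this
        exact absurd (lt_of_lt_of_le this hZS) (lt_irrefl _)
      -- extract components
      have h1 : Z.toCols₁ = W0 := congrArg Prod.fst hψZ
      have h2 : ((Z.toCols₁.submatrix id ⇑e)⁻¹ * Z.toCols₂).submatrix (⇑e.symm) id
          = V0 := congrArg (fun p => p.2.1) hψZ
      rw [h1] at h2
      have h3 : (W0.submatrix id ⇑e)⁻¹ * Z.toCols₂ = V0.submatrix ⇑e id := by
        have := congrArg (fun M : Matrix (Fin dx) (Fin dz) ℝ => M.submatrix ⇑e id) h2
        simpa [Matrix.submatrix_submatrix, Equiv.symm_comp_self] using this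
      have h4 : Z.toCols₂ = W0 * V0 := by
        have h5 := congrArg (fun M => (W0.submatrix id ⇑e) * M) h3
        rw [← Matrix.mul_assoc, Matrix.mul_nonsing_inv _ hQdet, Matrix.one_mul] at h5
        rw [h5, hsplit]
      rw [← Matrix.fromCols_toCols Z, h1, h4]
    -- everything in S equals Zstar
    have hZstarS : Zstar ∈ {Z | f Z ≤ lam} := le_of_eq hZstar
    have hall : ∀ Z ∈ {Z | f Z ≤ lam}, Z = Zstar := by
      intro Z' hZ'
      by_contra hne
      obtain ⟨Z, hZS, hZO', hZc⟩ := hS O {Zstar}ᶜ hOopen isOpen_compl_singleton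
        (fun Z hZ => by
          by_cases h : Z = Zstar
          · exact Or.inl (h ▸ hZO)
          · exact Or.inr h)
        ⟨Zstar, hZstarS, hZO⟩ ⟨Z', hZ', hne⟩
      exact hZc (hlocal Z ⟨hZS, hZO'⟩)
    -- conclude
    refine le_ciInf fun W => ?_
    by_contra hlt
    push_neg at hlt
    have hWS : Matrix.fromCols W (0 : Matrix (Fin dy) (Fin dz) ℝ) ∈ {Z | f Z ≤ lam} := by
      show f _ ≤ lam
      rw [hfC]
      simp only [Matrix.zero_mulVec, add_zero]
      exact le_of_lt hlt
    have := hall _ hWS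
    have hval : f (Matrix.fromCols W (0 : Matrix (Fin dy) (Fin dz) ℝ)) = lam := by
      rw [this, hZstar]
    rw [hfC] at hval
    simp only [Matrix.zero_mulVec, add_zero] at hval
    rw [hval] at hlt
    exact lt_irrefl _ hlt
  · -- non-injective case: perturb V in the kernel direction, contradiction with strictness
    exfalso
    have hdz : 0 < dz := lt_of_lt_of_le hdy hyz
    obtain ⟨a, b, hab, hne⟩ := Function.not_injective_iff.mp hinj
    set u : Fin dx → ℝ := a - b with hu
    have hu0 : u ≠ 0 := sub_ne_zero.mpr hne
    have hWu : W0.mulVec u = 0 := by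
      rw [hu, Matrix.mulVec_sub, hab, sub_self]
    set E : Matrix (Fin dx) (Fin dz) ℝ := Matrix.vecMulVec u (fun _ => 1) with hE
    have hE0 : E ≠ 0 := by
      obtain ⟨i, hi⟩ := Function.ne_iff.mp hu0
      intro h
      apply hi
      have := congrFun (congrFun h i) ⟨0, hdz⟩
      simpa [hE, Matrix.vecMulVec_apply] using this
    have hWE : ∀ w : Fin dz → ℝ, W0.mulVec (E.mulVec w) = 0 := by
      intro w
      have hEw : E.mulVec w = (∑ j, w j) • u := by
        funext i
        simp only [hE, Matrix.mulVec, dotProduct, Matrix.vecMulVec_apply,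
          Pi.smul_apply, smul_eq_mul, mul_one]
        rw [← Finset.mul_sum, mul_comm]
      rw [hEw, Matrix.mulVec_smul, hWu, smul_zero]
    -- path
    set γ : ℝ → Matrix (Fin dy) (Fin dx) ℝ × Matrix (Fin dx) (Fin dz) ℝ × Θ :=
      fun t => (W0, V0 + t • E, θ0) with hγ
    have hγ0 : γ 0 = (W0, V0, θ0) := by simp [hγ]
    have hγcont : Continuous γ := by
      refine continuous_const.prodMk (Continuous.prodMk ?_ continuous_const)
      exact continuous_const.add (continuous_id.smul continuous_const)
    have hpre : γ ⁻¹' U ∈ nhds (0 : ℝ) := by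
      apply hγcont.continuousAt.preimage_mem_nhds
      rw [hγ0]
      exact hU
    have hpre' : γ ⁻¹' U ∈ nhdsWithin (0:ℝ) {(0:ℝ)}ᶜ := nhdsWithin_le_nhds hpre
    obtain ⟨t, htU, ht0⟩ :=
      Filter.nonempty_of_mem (Filter.inter_mem hpre' self_mem_nhdsWithin)
    have hFeq : F₁ (γ t) = F₁ (W0, V0, θ0) := by
      rw [hγ]
      rw [hF₁, hF₁]
      congr 1
      funext ω
      congr 1
      rw [Matrix.add_mulVec, Matrix.smul_mulVec]
      rw [Matrix.mulVec_add, Matrix.mulVec_add, Matrix.mulVec_add, Matrix.mulVec_smul,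
        hWE, smul_zero, add_zero]
    have hγne : γ t ≠ (W0, V0, θ0) := by
      intro h
      have h2 : V0 + t • E = V0 := congrArg (fun p => p.2.1) h
      have h3 : t • E = 0 := add_eq_left.mp h2
      exact (smul_ne_zero ht0 hE0) h3
    have := hUmin (γ t) htU hγne
    rw [hFeq] at this
    exact lt_irrefl _ this
end
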